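/- Let Λ be a free abelian group of finite rank, let the ℤ/2-vector space V = Λ/2Λ be written as a direct sum V = V₁ ⊕ ⋯ ⊕ V_k of subgroups. Then there exist subgroups Λ₁, …, Λ_k of Λ such that Λ = Λ₁ ⊕ ⋯ ⊕ Λ_k and the image of Λᵢ in Λ/2Λ equals Vᵢ for each i. -/

import Mathlib

open Submodule

section helpers

variable {α : Type*} [CompleteLattice α]

lemma finSup_succ {k : ℕ} (f : Fin (k + 1) → α) :
    ⨆ i, f i = f 0 ⊔ ⨆ i : Fin k, f i.succ := by
  apply le_antisymm
  · exact iSup_le (fun i => by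
      induction i using Fin.cases with
      | zero => exact le_sup_left
      | succ m => exact le_sup_of_le_right (le_iSup (fun i : Fin k => f i.succ) m))
  · exact sup_le (le_iSup f 0) (iSup_le fun i => le_iSup f i.succ)

lemma finSup_ne_zero {k : ℕ} (f : Fin (k + 1) → α) :
    ⨆ j, ⨆ (_ : j ≠ 0), f j = ⨆ i : Fin k, f i.succ := by
  apply le_antisymm
  · refine iSup_le fun j => iSup_le fun hj => ?_
    obtain ⟨i, rfl⟩ := Fin.exists_succ_eq.mpr hj
    exact le_iSup (fun i : Fin k => f i.succ) i
  · exact iSup_le fun i => le_iSup_of_le i.succ (le_iSup_of_le (Fin.succ_ne_zero i) le_rfl)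

end helpers

section split

variable (Λ : Type*) [AddCommGroup Λ] [Module.Free ℤ Λ] [Module.Finite ℤ Λ]

local notation "K" => LinearMap.range (LinearMap.lsmul ℤ Λ 2)

lemma split (R : Submodule ℤ Λ)
    (U₁ U₂ : Submodule ℤ (Λ ⧸ (K : Submodule ℤ Λ)))
    (hsup : U₁ ⊔ U₂ = R.map (K : Submodule ℤ Λ).mkQ)
    (hinf : U₁ ⊓ U₂ = ⊥) :
    ∃ A B : Submodule ℤ Λ, A ⊔ B = R ∧ A ⊓ B = ⊥ ∧
      A.map (K : Submodule ℤ Λ).mkQ = U₁ ∧ B.map (K : Submodule ℤ Λ).mkQ = U₂ := by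
  classical
  set p := (K : Submodule ℤ Λ).mkQ with hp
  have hker : ∀ x : Λ, p ((2 : ℤ) • x) = 0 := by
    intro x
    rw [hp, Submodule.mkQ_apply, Submodule.Quotient.mk_eq_zero]
    exact ⟨x, rfl⟩
  set W : Submodule ℤ Λ := R ⊓ U₂.comap p with hW
  have hWR : W ≤ R := inf_le_left
  have h2W : ∀ x ∈ R, (2 : ℤ) • x ∈ W := by
    intro x hx
    have h2 : (2 : ℤ) • x ∈ U₂.comap p := by
      rw [Submodule.mem_comap, hker]; exact U₂.zero_mem
    exact Submodule.mem_inf.mpr ⟨R.smul_mem 2 hx, h2⟩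
  obtain ⟨n, o, hno, bR, bW, a, snf⟩ :=
    W.exists_smith_normal_form_of_le (Module.Free.chooseBasis ℤ Λ) R hWR
  have hι : ∀ v : ↥W, ((Submodule.inclusion hWR v : ↥R) : Λ) = (v : Λ) := fun v => rfl
  set e : Fin n → Fin o := Fin.castLE hno with he
  have hinj : Function.Injective e := Fin.castLE_injective hno
  have key : ∀ j : Fin o, ∃ i : Fin n, e i = j ∧ a i ∣ 2 := by
    intro j
    set g : ↥W →ₗ[ℤ] ℤ :=
      (Finsupp.lapply j).comp (bR.repr.toLinearMap.comp (Submodule.inclusion hWR)) with hg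
    have hgb : ∀ i : Fin n, g (bW i) = a i * (if e i = j then 1 else 0) := by
      intro i
      have h1 : (Submodule.inclusion hWR) (bW i) = a i • bR (e i) :=
        Subtype.coe_injective (snf i)
      simp [hg, h1, Module.Basis.repr_self, Finsupp.single_apply, mul_comm]
    set w : ↥W := ⟨(2 : ℤ) • ((bR j : Λ)), h2W _ (bR j).2⟩ with hw
    have hgw : g w = 2 := by
      have h2 : (Submodule.inclusion hWR) w = (2 : ℤ) • bR j := Subtype.coe_injective rfl
      rw [hg]
      simp [LinearMap.comp_apply, h2, Module.Basis.repr_self]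
    have hsum : g w = ∑ i, bW.repr w i * (a i * (if e i = j then 1 else 0)) := by
      conv_lhs => rw [← bW.sum_repr w]
      rw [map_sum]
      exact Finset.sum_congr rfl fun i _ => by rw [map_smul, hgb, smul_eq_mul]
    by_cases hex : ∃ i : Fin n, e i = j
    · obtain ⟨i, hi⟩ := hex
      refine ⟨i, hi, ?_⟩
      have : g w = bW.repr w i * a i := by
        rw [hsum, Finset.sum_eq_single i]
        · rw [if_pos hi, mul_one]
        · intro i' _ hne
          rw [if_neg (fun h => hne (hinj (h.trans hi.symm))), mul_zero, mul_zero]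
        · intro h
          exact absurd (Finset.mem_univ i) h
      exact Dvd.intro _ (by rw [← hgw, this, mul_comm])
    · exfalso
      push_neg at hex
      rw [hsum] at hgw
      rw [Finset.sum_eq_zero (fun i _ => by rw [if_neg (hex i), mul_zero, mul_zero])] at hgw
      exact two_ne_zero hgw.symm
  have hon : o ≤ n := by
    have := Fintype.card_le_of_surjective e (fun j => ⟨(key j).choose, (key j).choose_spec.1⟩)
    simpa using this
  have hno' : n = o := le_antisymm hno hon
  subst hno'
  have heid : ∀ i : Fin n, e i = i := fun i => Fin.ext rfl
  have hdvd : ∀ j : Fin n, a j ∣ 2 := by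
    intro j
    obtain ⟨i, hi, hd⟩ := key j
    rw [heid] at hi
    rwa [hi] at hd
  have snf' : ∀ i : Fin n, (bW i : Λ) = a i • (bR i : Λ) := by
    intro i
    rw [snf i, heid i]
  have hbWmem : ∀ i : Fin n, a i • (bR i : Λ) ∈ W := fun i => by
    rw [← snf' i]; exact (bW i).2
  set S : Set (Fin n) := {j | IsUnit (a j)} with hS
  have hSmem : ∀ j ∈ S, (bR j : Λ) ∈ W := by
    intro j hj
    have hsq : a j * a j = 1 := by
      rcases Int.isUnit_iff.mp hj with h | h <;> simp [h]
    have : (bR j : Λ) = a j • (a j • (bR j : Λ)) := by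
      rw [smul_smul, hsq, one_smul]
    rw [this]
    exact W.smul_mem _ (hbWmem j)
  have hnotS : ∀ j ∉ S, a j = 2 ∨ a j = -2 := by
    intro j hj
    have hna : (a j).natAbs ∣ 2 := by
      have := Int.natAbs_dvd_natAbs.mpr (hdvd j)
      simpa using this
    rcases (Nat.prime_two.eq_one_or_self_of_dvd _ hna) with h | h
    · exact absurd (Int.isUnit_iff_natAbs_eq.mpr h) hj
    · exact Int.natAbs_eq_iff.mp (by simpa using h)
  have hpnotS : ∀ j ∉ S, p (a j • (bR j : Λ)) = 0 := by
    intro j hj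
    rcases hnotS j hj with h | h
    · rw [h]; exact hker _
    · rw [h, show ((-2 : ℤ)) • (bR j : Λ) = -((2:ℤ) • (bR j : Λ)) by rw [neg_smul], map_neg,
        hker, neg_zero]
  have hWspan : W = span ℤ (Set.range fun i : Fin n => a i • (bR i : Λ)) := by
    have h1 : W = Submodule.map W.subtype ⊤ := (Submodule.map_subtype_top W).symm
    rw [h1, ← bW.span_eq, Submodule.map_span, ← Set.range_comp,
      show (W.subtype ∘ bW) = fun i : Fin n => a i • (bR i : Λ) from funext fun i => snf' i]
  set Btil : Submodule ℤ ↥R := span ℤ (bR '' S) with hBtil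
  set B : Submodule ℤ Λ := Btil.map R.subtype with hB
  have hBW : B ≤ W := by
    rw [hB, Submodule.map_le_iff_le_comap]
    refine span_le.mpr ?_
    rintro _ ⟨j, hj, rfl⟩
    exact hSmem j hj
  have hpB : B.map p = U₂ := by
    apply le_antisymm
    · rw [hB, ← Submodule.map_comp, hBtil, Submodule.map_span]
      refine span_le.mpr ?_
      rintro _ ⟨_, ⟨j, hj, rfl⟩, rfl⟩
      exact Submodule.mem_comap.mp (Submodule.mem_inf.mp (hSmem j hj)).2
    · intro u hu
      have hu' : u ∈ Submodule.map p R := by rw [← hsup]; exact Submodule.mem_sup_right hu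
      obtain ⟨x, hxR, hxu⟩ := hu'
      have hxW : x ∈ W := Submodule.mem_inf.mpr
        ⟨hxR, Submodule.mem_comap.mpr (by rw [hxu]; exact hu)⟩
      have hWB : Submodule.map p W ≤ Submodule.map p B := by
        rw [hWspan, Submodule.map_span]
        refine span_le.mpr ?_
        rintro _ ⟨_, ⟨i, rfl⟩, rfl⟩
        by_cases hiS : i ∈ S
        · rw [map_smul]
          have h1 : ((bR i : Λ)) ∈ B :=
            Submodule.mem_map_of_mem (subset_span (Set.mem_image_of_mem _ hiS))
          exact Submodule.smul_mem _ _ (Submodule.mem_map_of_mem h1)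
        · rw [hpnotS i hiS]; exact zero_mem _
      rw [← hxu]
      exact hWB (Submodule.mem_map_of_mem hxW)
  have hchoice : ∀ j : {j : Fin n // j ∉ S}, ∃ wj : ↥R, wj ∈ Btil ∧
      p ((bR j.1 : Λ)) - p ((wj : Λ)) ∈ U₁ := by
    intro j
    have hv : p ((bR j.1 : Λ)) ∈ U₁ ⊔ U₂ := by
      rw [hsup]
      exact Submodule.mem_map_of_mem (bR j.1).2
    obtain ⟨v₁, hv₁, v₂, hv₂, hvsum⟩ := Submodule.mem_sup.mp hv
    rw [← hpB] at hv₂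
    obtain ⟨x, hxB, hxv⟩ := hv₂
    rw [hB] at hxB
    obtain ⟨y, hyB, rfl⟩ := hxB
    refine ⟨y, hyB, ?_⟩
    have hyv : p ((y : Λ)) = v₂ := hxv
    rw [hyv, ← hvsum]
    simpa using hv₁
  choose w hw1 hw2 using hchoice
  set c : {j : Fin n // j ∉ S} → ↥R := fun j => bR j.1 - w j with hc
  set Atil : Submodule ℤ ↥R := span ℤ (Set.range c) with hAtil
  set A : Submodule ℤ Λ := Atil.map R.subtype with hA
  have hsupR : Atil ⊔ Btil = ⊤ := by
    rw [eq_top_iff, ← bR.span_eq]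
    refine span_le.mpr ?_
    rintro _ ⟨j, rfl⟩
    by_cases hj : j ∈ S
    · exact Submodule.mem_sup_right (subset_span (Set.mem_image_of_mem _ hj))
    · have hcj : bR j = c ⟨j, hj⟩ + w ⟨j, hj⟩ := by rw [hc]; simp
      rw [hcj]
      exact add_mem (Submodule.mem_sup_left (subset_span ⟨⟨j, hj⟩, rfl⟩))
        (Submodule.mem_sup_right (hw1 _))
  have hinfR : Atil ⊓ Btil = ⊥ := by
    rw [eq_bot_iff]
    rintro x hx
    obtain ⟨hxA, hxB⟩ := Submodule.mem_inf.mp hx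
    rw [hAtil] at hxA
    obtain ⟨d, hd⟩ := (mem_span_range_iff_exists_fun ℤ).mp hxA
    have hsum : (∑ j, d j • (bR j.1 : ↥R)) = x + ∑ j, d j • w j := by
      rw [← hd, hc]
      simp [smul_sub, Finset.sum_sub_distrib]
    have hy : (∑ j, d j • (bR j.1 : ↥R)) ∈ span ℤ (⇑bR '' S) := by
      rw [hsum]
      exact add_mem hxB (Submodule.sum_mem _ fun j _ => Submodule.smul_mem _ _ (hw1 j))
    have hy' : (∑ j, d j • (bR j.1 : ↥R)) ∈ span ℤ (⇑bR '' Sᶜ) :=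
      Submodule.sum_mem _ fun j _ =>
        Submodule.smul_mem _ _ (subset_span (Set.mem_image_of_mem _ j.2))
    have hdisj := bR.linearIndependent.disjoint_span_image (disjoint_compl_left (a := S))
    have hzero : (∑ j, d j • (bR j.1 : ↥R)) = 0 := by
      have h0 := hdisj.le_bot (Submodule.mem_inf.mpr ⟨hy', hy⟩)
      simpa using h0
    have hli : LinearIndependent ℤ (fun j : {j : Fin n // j ∉ S} => bR j.1) :=
      bR.linearIndependent.comp _ Subtype.val_injective
    have hd0 : ∀ j, d j = 0 := Fintype.linearIndependent_iff.mp hli d hzero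
    rw [← hd]
    simp [hd0]
  have hABsup : A ⊔ B = R := by
    rw [hA, hB, ← Submodule.map_sup, hsupR, Submodule.map_subtype_top]
  have hABinf : A ⊓ B = ⊥ := by
    rw [hA, hB, ← Submodule.map_inf _ (Submodule.injective_subtype R), hinfR, Submodule.map_bot]
  have hAle : Submodule.map p A ≤ U₁ := by
    rw [hA, ← Submodule.map_comp, hAtil, Submodule.map_span, ← Set.range_comp]
    refine span_le.mpr ?_
    rintro _ ⟨j, rfl⟩
    have hcj : ((p ∘ₗ R.subtype) ∘ c) j = p ((bR j.1 : Λ)) - p ((w j : Λ)) := by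
      simp [hc, map_sub]
    rw [hcj]
    exact hw2 j
  have hpA : Submodule.map p A = U₁ := by
    apply le_antisymm hAle
    intro u hu
    have h1 : u ∈ Submodule.map p A ⊔ U₂ := by
      rw [← hpB, ← Submodule.map_sup, hABsup, ← hsup]
      exact Submodule.mem_sup_left hu
    obtain ⟨x, hx, y, hy, hxy⟩ := Submodule.mem_sup.mp h1
    have hy1 : y ∈ U₁ := by
      have : y = u - x := by rw [← hxy]; abel
      rw [this]
      exact sub_mem hu (hAle hx)
    have hy0 : y = 0 := by
      have := hinf ▸ Submodule.mem_inf.mpr ⟨hy1, hy⟩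
      simpa using this
    rw [← hxy, hy0, add_zero]
    exact hx
  exact ⟨A, B, hABsup, hABinf, hpA, hpB⟩

end split

lemma disj_aux {M : Type*} [AddCommGroup M] [Module ℤ M]
    {X A B Rest : Submodule ℤ M} (hXB : X ≤ B) (hRB : Rest ≤ B)
    (hAB : A ⊓ B = ⊥) (hXR : X ⊓ Rest = ⊥) : X ⊓ (A ⊔ Rest) = ⊥ := by
  rw [eq_bot_iff]
  intro x hx
  obtain ⟨hxX, hxAR⟩ := Submodule.mem_inf.mp hx
  obtain ⟨a, ha, r, hr, har⟩ := Submodule.mem_sup.mp hxAR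
  have haeq : a = x - r := by rw [← har]; abel
  have haB : a ∈ B := haeq ▸ sub_mem (hXB hxX) (hRB hr)
  have ha0 : a = 0 := by
    have h1 := Submodule.mem_inf.mpr ⟨ha, haB⟩
    rw [hAB] at h1
    exact (Submodule.mem_bot _).mp h1
  have hxr : x = r := by rw [← har, ha0, zero_add]
  have h2 := Submodule.mem_inf.mpr ⟨hxX, hxr ▸ hr⟩
  rw [hXR] at h2
  exact h2

section main

variable (Λ : Type*) [AddCommGroup Λ] [Module.Free ℤ Λ] [Module.Finite ℤ Λ]

local notation "K" => LinearMap.range (LinearMap.lsmul ℤ Λ 2)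

lemma main_aux : ∀ (k : ℕ) (V : Fin k → Submodule ℤ (Λ ⧸ (K : Submodule ℤ Λ)))
    (R C : Submodule ℤ Λ), iSupIndep V → (⨆ i, V i) = R.map (K : Submodule ℤ Λ).mkQ →
    R ⊓ C = ⊥ → R ⊔ C = ⊤ →
    ∃ L : Fin k → Submodule ℤ Λ, iSupIndep L ∧ (⨆ i, L i) = R ∧
      ∀ i, (L i).map (K : Submodule ℤ Λ).mkQ = V i := by
  intro k
  induction k with
  | zero =>
    intro V R C _ hmap hinf hsup
    have hR : R = ⊥ := by
      rw [iSup_of_empty] at hmap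
      have hmem : ∀ x ∈ R, ∃ y ∈ R, x = (2 : ℤ) • y := by
        intro x hx
        have hx0 : (K : Submodule ℤ Λ).mkQ x = 0 := by
          have : (K : Submodule ℤ Λ).mkQ x ∈ R.map (K : Submodule ℤ Λ).mkQ :=
            Submodule.mem_map_of_mem hx
          rw [← hmap] at this
          exact (Submodule.mem_bot _).mp this
        have hxK : x ∈ (K : Submodule ℤ Λ) := by
          rwa [← Submodule.Quotient.mk_eq_zero, ← Submodule.mkQ_apply]
        obtain ⟨z, hz⟩ := hxK
        have hz' : x = (2 : ℤ) • z := hz.symm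
        obtain ⟨r, hrR, c, hcC, hrc⟩ := Submodule.mem_sup.mp (hsup ▸ Submodule.mem_top (x := z))
        have h2c : (2 : ℤ) • c ∈ R ⊓ C := by
          refine Submodule.mem_inf.mpr ⟨?_, C.smul_mem _ hcC⟩
          have : (2 : ℤ) • c = x - (2 : ℤ) • r := by
            rw [hz', ← hrc, smul_add]; abel
          rw [this]
          exact sub_mem hx (R.smul_mem _ hrR)
        rw [hinf] at h2c
        have hc0 : (2 : ℤ) • c = 0 := (Submodule.mem_bot _).mp h2c
        refine ⟨r, hrR, ?_⟩
        rw [hz', ← hrc, smul_add, hc0, add_zero]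
      have hpow : ∀ (m : ℕ), ∀ x ∈ R, ∃ y ∈ R, x = ((2 : ℤ) ^ m) • y := by
        intro m
        induction m with
        | zero => exact fun x hx => ⟨x, hx, by simp⟩
        | succ m ihm =>
          intro x hx
          obtain ⟨y, hy, hxy⟩ := ihm x hx
          obtain ⟨z, hz, hyz⟩ := hmem y hy
          exact ⟨z, hz, by rw [hxy, hyz, smul_smul, pow_succ]⟩
      rw [eq_bot_iff]
      intro x hx
      rw [Submodule.mem_bot]
      set b := Module.Free.chooseBasis ℤ Λ
      have hrepr : ∀ i, b.repr x i = 0 := by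
        intro i
        by_contra hd
        set d := b.repr x i with hdd
        have hdvd : ∀ m : ℕ, ((2 : ℤ) ^ m) ∣ d := by
          intro m
          obtain ⟨y, _, hxy⟩ := hpow m x hx
          refine ⟨b.repr y i, ?_⟩
          rw [hdd, hxy, map_smul, Finsupp.smul_apply, smul_eq_mul]
        have h1 := Int.le_of_dvd (abs_pos.mpr hd) ((dvd_abs _ _).mpr (hdvd d.natAbs))
        have h2 : ((d.natAbs : ℤ)) < 2 ^ d.natAbs := by
          have := Nat.lt_two_pow_self (n := d.natAbs)
          exact_mod_cast this
        rw [Int.abs_eq_natAbs] at h1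
        omega
      have : b.repr x = 0 := Finsupp.ext hrepr
      have h0 : b.repr x = b.repr 0 := by rw [this, map_zero]
      exact b.repr.injective h0
    refine ⟨fun i => i.elim0, fun i => i.elim0, ?_, fun i => i.elim0⟩
    · rw [hR, iSup_of_empty]
  | succ k ih =>
    intro V R C hind hmap hinf hsup
    have hU12 : V 0 ⊔ (⨆ i : Fin k, V i.succ) = R.map (K : Submodule ℤ Λ).mkQ := by
      rw [← finSup_succ V]
      exact hmap
    have hU12' : V 0 ⊓ (⨆ i : Fin k, V i.succ) = ⊥ := by
      have h1 := hind 0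
      rw [finSup_ne_zero V] at h1
      exact disjoint_iff.mp h1
    obtain ⟨A, B, hABsup, hABinf, hpA, hpB⟩ := split Λ R (V 0) (⨆ i : Fin k, V i.succ) hU12 hU12'
    have hAR : A ≤ R := hABsup ▸ le_sup_left
    have hBR : B ≤ R := hABsup ▸ le_sup_right
    have hBC' : B ⊓ (A ⊔ C) = ⊥ := by
      rw [sup_comm A C]
      exact disj_aux hBR hAR (by rw [inf_comm]; exact hinf) (by rw [inf_comm]; exact hABinf)
    have hBC'' : B ⊔ (A ⊔ C) = ⊤ := by
      rw [← sup_assoc, sup_comm B A, hABsup]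
      exact hsup
    obtain ⟨L', hL'ind, hL'sup, hL'map⟩ :=
      ih (fun i => V i.succ) B (A ⊔ C) (hind.comp (Fin.succ_injective k)) hpB.symm hBC' hBC''
    refine ⟨Fin.cons A L', ?_, ?_, ?_⟩
    · intro i
      induction i using Fin.cases with
      | zero =>
        rw [finSup_ne_zero (Fin.cons A L')]
        simp only [Fin.cons_zero, Fin.cons_succ]
        rw [disjoint_iff, hL'sup]
        exact hABinf
      | succ m =>
        simp only [Fin.cons_succ]
        have hle : (⨆ j, ⨆ (_ : j ≠ m.succ), Fin.cons A L' j) ≤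
            A ⊔ ⨆ j, ⨆ (_ : j ≠ m), L' j := by
          refine iSup_le fun j => iSup_le fun hj => ?_
          induction j using Fin.cases with
          | zero => exact le_sup_of_le_left (by rw [Fin.cons_zero])
          | succ i =>
            rw [Fin.cons_succ]
            have him : i ≠ m := fun h => hj (by rw [h])
            exact le_sup_of_le_right (le_iSup_of_le i (le_iSup_of_le him le_rfl))
        rw [disjoint_iff]
        rw [eq_bot_iff]
        refine le_trans (inf_le_inf_left _ hle) ?_
        have hrest : (⨆ j, ⨆ (_ : j ≠ m), L' j) ≤ B := by
          rw [← hL'sup]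
          exact iSup_le fun j => iSup_le fun _ => le_iSup L' j
        have hLm : L' m ≤ B := by rw [← hL'sup]; exact le_iSup L' m
        rw [disj_aux hLm hrest hABinf (disjoint_iff.mp (hL'ind m))]
    · rw [finSup_succ (Fin.cons A L')]
      simp only [Fin.cons_zero, Fin.cons_succ]
      rw [hL'sup]
      exact hABsup
    · intro i
      induction i using Fin.cases with
      | zero => rw [Fin.cons_zero]; exact hpA
      | succ m => rw [Fin.cons_succ]; exact hL'map m

end main

/-- If `Λ` is a free abelian group of finite rank and the `ℤ/2`-vector space
`Λ/2Λ` is the internal direct sum of subgroups `V₁, …, V_k`, then there are subgroups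
`Λ₁, …, Λ_k` of `Λ` with `Λ = Λ₁ ⊕ ⋯ ⊕ Λ_k` and the image of `Λᵢ` in `Λ/2Λ` equal to `Vᵢ`. -/
theorem stmt_1 (Λ : Type*) [AddCommGroup Λ] [Module.Free ℤ Λ] [Module.Finite ℤ Λ]
    (k : ℕ)
    (V : Fin k → Submodule ℤ (Λ ⧸ LinearMap.range (LinearMap.lsmul ℤ Λ 2)))
    (hV : DirectSum.IsInternal V) :
    ∃ L : Fin k → Submodule ℤ Λ, DirectSum.IsInternal L ∧
      ∀ i, (L i).map (LinearMap.range (LinearMap.lsmul ℤ Λ 2)).mkQ = V i := by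
  rw [DirectSum.isInternal_submodule_iff_iSupIndep_and_iSup_eq_top] at hV
  obtain ⟨hind, hsup⟩ := hV
  have hmap : (⨆ i, V i) =
      (⊤ : Submodule ℤ Λ).map (LinearMap.range (LinearMap.lsmul ℤ Λ 2)).mkQ := by
    rw [hsup, Submodule.map_top, Submodule.range_mkQ]
  obtain ⟨L, hLind, hLsup, hLmap⟩ := main_aux Λ k V ⊤ ⊥ hind hmap (by simp) (by simp)
  exact ⟨L, (DirectSum.isInternal_submodule_iff_iSupIndep_and_iSup_eq_top L).mpr
    ⟨hLind, hLsup⟩, hLmap⟩
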